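/- Let φ : (A, ⟪−,−⟫_A) → (B, ⟪−,−⟫_B) be a morphism of double Poisson algebras, and define n_φ(a, f, b) := n_A(a, f∘φ, b) and m_φ(f, a, g) := m_B(f, φ(a), g) as above. Then for all a, b, c ∈ A and f, g ∈ B*: n_φ(ab, f, c) = n_φ(a, b·f, c) + a·n_φ(b, f, c) in A, and m_φ(f, a, g·b) = m_φ(f, a, g)·b − f·n_φ(a, g, b) in B*, where the A-actions on B* are (b·f)(x) := f(xφ(b)) and (f·b)(x) := f(φ(b)x). (These are the quartic Stasheff identities SI(4) for the A∞-structure on ∂_{d−1}φ = A ⊕ B*[d−1] constructed in Theorem 5.5, in the degree 0, trivially graded case.) -/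
import Mathlib


open TensorProduct

noncomputable section

variable {k : Type*} [Field k] [CharZero k]
variable {A : Type*} [NonUnitalRing A] [Module k A] [SMulCommClass k A A] [IsScalarTower k A A]

/-- Outer left action of `A` on `A ⊗ A`: `a · (u ⊗ v) = (a*u) ⊗ v`. -/
def lAct (a : A) : A ⊗[k] A →ₗ[k] A ⊗[k] A :=
  TensorProduct.map (LinearMap.mulLeft k a) LinearMap.id

/-- Outer right action of `A` on `A ⊗ A`: `(u ⊗ v) · b = u ⊗ (v*b)`. -/
def rAct (b : A) : A ⊗[k] A →ₗ[k] A ⊗[k] A :=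
  TensorProduct.map LinearMap.id (LinearMap.mulRight k b)

/-- `⟪a, u ⊗ v⟫_L = ⟪a,u⟫ ⊗ v`, extended linearly. -/
def brL (br : A →ₗ[k] A →ₗ[k] A ⊗[k] A) (a : A) :
    A ⊗[k] A →ₗ[k] (A ⊗[k] A) ⊗[k] A :=
  TensorProduct.map (br a) LinearMap.id

/-- The cyclic permutation `σ(u ⊗ v ⊗ w) = w ⊗ u ⊗ v` on `(A ⊗ A) ⊗ A`. -/
def cyc : (A ⊗[k] A) ⊗[k] A →ₗ[k] (A ⊗[k] A) ⊗[k] A :=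
  (TensorProduct.assoc k A A A).symm.toLinearMap ∘ₗ
    (TensorProduct.comm k (A ⊗[k] A) A).toLinearMap

/-- A double Poisson bracket: antisymmetry, Leibniz, and double Jacobi. -/
def IsDoublePoisson (br : A →ₗ[k] A →ₗ[k] A ⊗[k] A) : Prop :=
  (∀ a b : A, br b a = - (TensorProduct.comm k A A) (br a b)) ∧
  (∀ a b c : A, br a (b * c) = rAct c (br a b) + lAct b (br a c)) ∧
  (∀ a b c : A,
    brL br a (br b c) + cyc (brL br b (br c a)) + cyc (cyc (brL br c (br a b))) = 0)

/-- `(f ⊗ g) : A ⊗ A → k`. -/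
def pair2 (f g : Module.Dual k A) : A ⊗[k] A →ₗ[k] k :=
  TensorProduct.lift ((LinearMap.mul k k).compl₁₂ f g)

/-- The associated trilinear map `n(a,f,b) = (id ⊗ f)(⟪b,a⟫)`. -/
def nMap (br : A →ₗ[k] A →ₗ[k] A ⊗[k] A) (a : A) (f : Module.Dual k A) (b : A) : A :=
  TensorProduct.rid k A (TensorProduct.map LinearMap.id f (br b a))

/-- The associated trilinear map `m(f,a,g)(b) = (f ⊗ g)(⟪b,a⟫)`. -/
def mMap (br : A →ₗ[k] A →ₗ[k] A ⊗[k] A) (f : Module.Dual k A) (a : A)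
    (g : Module.Dual k A) : Module.Dual k A :=
  pair2 f g ∘ₗ br.flip a

/-- The left action of `A` on `A* = Hom_k(A,k)`: `(a·f)(c) = f(c*a)`. -/
def dL (a : A) (f : Module.Dual k A) : Module.Dual k A :=
  f ∘ₗ LinearMap.mulRight k a

/-- The right action of `A` on `A* = Hom_k(A,k)`: `(f·b)(c) = f(b*c)`. -/
def dR (f : Module.Dual k A) (b : A) : Module.Dual k A :=
  f ∘ₗ LinearMap.mulLeft k b

variable {B : Type*} [NonUnitalRing B] [Module k B] [SMulCommClass k B B]
  [IsScalarTower k B B]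

/-- A morphism of double Poisson algebras: an algebra morphism intertwining the
brackets, `(φ ⊗ φ)(⟪a,a'⟫_A) = ⟪φ(a), φ(a')⟫_B`. -/
def IsDPMorphism (brA : A →ₗ[k] A →ₗ[k] A ⊗[k] A) (brB : B →ₗ[k] B →ₗ[k] B ⊗[k] B)
    (φ : A →ₙₐ[k] B) : Prop :=
  ∀ a a' : A,
    TensorProduct.map (φ : A →ₗ[k] B) (φ : A →ₗ[k] B) (brA a a') = brB (φ a) (φ a')

/-- The mixed triple product `n_φ(a, f, b) := n_A(a, f∘φ, b)` for `f ∈ B*`. -/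
def nPhi (brA : A →ₗ[k] A →ₗ[k] A ⊗[k] A) (φ : A →ₙₐ[k] B)
    (a : A) (f : Module.Dual k B) (b : A) : A :=
  nMap brA a (f ∘ₗ (φ : A →ₗ[k] B)) b

/-- The mixed triple product `m_φ(f, a, g) := m_B(f, φ(a), g)` for `f, g ∈ B*`. -/
def mPhi (brB : B →ₗ[k] B →ₗ[k] B ⊗[k] B) (φ : A →ₙₐ[k] B)
    (f : Module.Dual k B) (a : A) (g : Module.Dual k B) : Module.Dual k B :=
  mMap brB f (φ a) g

lemma pair2_tmul (f g : Module.Dual k A) (u v : A) :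
    pair2 f g (u ⊗ₜ[k] v) = f u * g v := by
  simp [pair2]

lemma pair2_comm (f g : Module.Dual k A) (X : A ⊗[k] A) :
    pair2 f g ((TensorProduct.comm k A A) X) = pair2 g f X := by
  induction X using TensorProduct.induction_on with
  | zero => simp
  | tmul u v => simp [pair2_tmul, mul_comm]
  | add X Y hX hY => simp [map_add, hX, hY]

lemma pair2_rAct (f g : Module.Dual k A) (c : A) (X : A ⊗[k] A) :
    pair2 f g (rAct c X) = pair2 f (g ∘ₗ LinearMap.mulRight k c) X := by
  induction X using TensorProduct.induction_on with
  | zero => simp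
  | tmul u v => simp [rAct, pair2_tmul]
  | add X Y hX hY => simp [map_add, hX, hY]

lemma pair2_lAct (f g : Module.Dual k A) (c : A) (X : A ⊗[k] A) :
    pair2 f g (lAct c X) = pair2 (f ∘ₗ LinearMap.mulLeft k c) g X := by
  induction X using TensorProduct.induction_on with
  | zero => simp
  | tmul u v => simp [lAct, pair2_tmul]
  | add X Y hX hY => simp [map_add, hX, hY]

lemma nAux1 (h : Module.Dual k A) (b : A) (X : A ⊗[k] A) :
    TensorProduct.rid k A (TensorProduct.map LinearMap.id h (rAct b X))
      = TensorProduct.rid k A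
          (TensorProduct.map LinearMap.id (h ∘ₗ LinearMap.mulRight k b) X) := by
  induction X using TensorProduct.induction_on with
  | zero => simp
  | tmul u v => simp [rAct]
  | add X Y hX hY => simp [map_add, hX, hY]

lemma nAux2 (h : Module.Dual k A) (a : A) (X : A ⊗[k] A) :
    TensorProduct.rid k A (TensorProduct.map LinearMap.id h (lAct a X))
      = a * TensorProduct.rid k A (TensorProduct.map LinearMap.id h X) := by
  induction X using TensorProduct.induction_on with
  | zero => simp
  | tmul u v => simp [lAct, mul_smul_comm]
  | add X Y hX hY => simp [map_add, hX, hY, left_distrib]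

lemma comp_mulRight (f : Module.Dual k B) (φ : A →ₙₐ[k] B) (b : A) :
    (f ∘ₗ (φ : A →ₗ[k] B)) ∘ₗ LinearMap.mulRight k b
      = (f ∘ₗ LinearMap.mulRight k (φ b)) ∘ₗ (φ : A →ₗ[k] B) := by
  ext x; simp [map_mul]

lemma mapφφ_comm (φ : A →ₙₐ[k] B) (T : A ⊗[k] A) :
    TensorProduct.map (φ : A →ₗ[k] B) (φ : A →ₗ[k] B) ((TensorProduct.comm k A A) T)
      = (TensorProduct.comm k B B)
          (TensorProduct.map (φ : A →ₗ[k] B) (φ : A →ₗ[k] B) T) := by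
  induction T using TensorProduct.induction_on with
  | zero => simp
  | tmul u v => simp
  | add X Y hX hY => simp [map_add, hX, hY]

lemma auxL (f g : Module.Dual k B) (φ : A →ₙₐ[k] B) (x : B) (T : A ⊗[k] A) :
    f (φ (TensorProduct.rid k A
        (TensorProduct.map LinearMap.id (g ∘ₗ (φ : A →ₗ[k] B)) T)) * x)
      = pair2 (f ∘ₗ LinearMap.mulRight k x) g
          (TensorProduct.map (φ : A →ₗ[k] B) (φ : A →ₗ[k] B) T) := by
  induction T using TensorProduct.induction_on with
  | zero => simp
  | tmul u v => simp [pair2_tmul, smul_mul_assoc, mul_comm]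
  | add X Y hX hY => simp [map_add, add_mul, hX, hY]

/-- The quartic Stasheff identities SI(4) for the mixed triple
products on `∂φ = A ⊕ B*[-1]`: `n_φ(ab, f, c) = n_φ(a, b·f, c) + a·n_φ(b, f, c)` and
`m_φ(f, a, g·b) = m_φ(f,a,g)·b − f·n_φ(a,g,b)`, where the `A`-actions on `B*` are
`(b·f)(x) = f(x φ(b))` and `(f·b)(x) = f(φ(b) x)`. -/
theorem mixed_quartic_stasheff (brA : A →ₗ[k] A →ₗ[k] A ⊗[k] A)
    (brB : B →ₗ[k] B →ₗ[k] B ⊗[k] B) (hA : IsDoublePoisson brA)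
    (hB : IsDoublePoisson brB) (φ : A →ₙₐ[k] B) (hφ : IsDPMorphism brA brB φ) :
    (∀ (a b c : A) (f : Module.Dual k B),
      nPhi brA φ (a * b) f c
        = nPhi brA φ a (f ∘ₗ LinearMap.mulRight k (φ b)) c + a * nPhi brA φ b f c) ∧
    (∀ (a b : A) (f g : Module.Dual k B),
      mPhi brB φ f a (g ∘ₗ LinearMap.mulLeft k (φ b))
        = mPhi brB φ f a g ∘ₗ LinearMap.mulLeft k (φ b)
          - f ∘ₗ LinearMap.mulLeft k (φ (nPhi brA φ a g b))) := by
  constructor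
  · intro a b c f
    simp only [nPhi, nMap]
    rw [hA.2.1 c a b, map_add, map_add, nAux1, nAux2, comp_mulRight]
  · intro a b f g
    ext x
    simp only [mPhi, mMap, LinearMap.coe_comp, Function.comp_apply, LinearMap.sub_apply,
      LinearMap.flip_apply, LinearMap.mulLeft_apply]
    rw [hB.1 (φ a) x, hB.1 (φ a) (φ b * x), hB.2.1 (φ a) (φ b) x]
    simp only [map_neg, map_add, pair2_comm, pair2_rAct, pair2_lAct]
    have hQ : pair2 g (f ∘ₗ LinearMap.mulRight k x) (brB (φ a) (φ b))
        = - f (φ (nPhi brA φ a g b) * x) := by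
      rw [← hφ a b, hA.1 b a, map_neg, mapφφ_comm, map_neg, pair2_comm]
      simp only [nPhi, nMap]
      rw [auxL f g φ x]
    rw [hQ]
    ring
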